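/- Each of the explicit rotation matrices R_{T_0'}^{f_0}, R_{T_1'}^{f_1}, R_{T_2'}^{f_2}, R_{T_3'}^{f_3} of the 5-BC helix construction is a special orthogonal matrix (element of SO(3)) and has trace equal to (5 + 3√5)/4 = 1 + 2·cos β, where β = arccos((3φ − 1)/4) and φ = (1+√5)/2. Hence each is a rotation through the angle β = arccos((3φ − 1)/4). -/
import Mathlib


open Matrix

noncomputable section

noncomputable def R5 : Fin 4 → Matrix (Fin 3) (Fin 3) ℝ :=
  ![!![(1 + 3*Real.sqrt 5)/8, Real.sqrt ((3/2)*(3 - Real.sqrt 5))/4, 0;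
    -(Real.sqrt ((3/2)*(3 - Real.sqrt 5))/4), (1 + 3*Real.sqrt 5)/8, 0;
    0, 0, 1],
  !![(38 + 15*Real.sqrt 5)/72, Real.sqrt (287 - 380*Real.sqrt 5/3)/24, 1/(9*Real.sqrt 2);
    -(Real.sqrt (83 - 104*Real.sqrt 5/3)/24), 1/2 + 5*Real.sqrt 5/24, Real.sqrt (14 - 16*Real.sqrt 5/3)/6;
    (-23 + 9*Real.sqrt 5)/(36*Real.sqrt 2), -((5 + Real.sqrt 5)/(12*Real.sqrt 6)), (2 + 3*Real.sqrt 5)/9],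
  !![(65 + 33*Real.sqrt 5)/144, -((-19 + Real.sqrt 5)/(48*Real.sqrt 3)), (29 - 9*Real.sqrt 5)/(36*Real.sqrt 2);
    (-41 + 11*Real.sqrt 5)/(48*Real.sqrt 3), (9 + 17*Real.sqrt 5)/48, -((-1 + Real.sqrt 5)/(12*Real.sqrt 6));
    (11 - 9*Real.sqrt 5)/(36*Real.sqrt 2), 1/(6*Real.sqrt (369 + 165*Real.sqrt 5)), (11 + 3*Real.sqrt 5)/18],
  !![5/36 + 3*Real.sqrt 5/8, (13 - 2*Real.sqrt 5)/(24*Real.sqrt 3), (-8 + 3*Real.sqrt 5)/(18*Real.sqrt 2);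
    (-17 + 4*Real.sqrt 5)/(24*Real.sqrt 3), 1/2 + 5*Real.sqrt 5/24, (7 - 2*Real.sqrt 5)/(6*Real.sqrt 6);
    Real.sqrt (83 - 33*Real.sqrt 5)/36, (11 - 7*Real.sqrt 5)/(12*Real.sqrt 6), (11 + 3*Real.sqrt 5)/18]]

private lemma hh2 : Real.sqrt 2 ^ 2 = 2 := Real.sq_sqrt (by norm_num)
private lemma hh3 : Real.sqrt 3 ^ 2 = 3 := Real.sq_sqrt (by norm_num)
private lemma hh5 : Real.sqrt 5 ^ 2 = 5 := Real.sq_sqrt (by norm_num)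
private lemma s5lb : 2 ≤ Real.sqrt 5 := by nlinarith [hh5, Real.sqrt_nonneg 5]
private lemma s5ub : Real.sqrt 5 ≤ 2.24 := by nlinarith [hh5, Real.sqrt_nonneg 5]
private lemma s6e : Real.sqrt 6 = Real.sqrt 2 * Real.sqrt 3 := by
  rw [show (6:ℝ) = 2*3 by norm_num, Real.sqrt_mul (by norm_num)]

private lemma trans3 (a b c d e f g h i : ℝ) :
    (!![a,b,c;d,e,f;g,h,i])ᵀ = !![a,d,g;b,e,h;c,f,i] := by
  ext i j; fin_cases i <;> fin_cases j <;> rfl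

private lemma sA : Real.sqrt ((3/2)*(3 - Real.sqrt 5)) = (Real.sqrt 5 - 1)*Real.sqrt 3/2 := by
  rw [show ((3/2)*(3 - Real.sqrt 5) : ℝ) = ((Real.sqrt 5 - 1)*Real.sqrt 3/2)^2 from by linear_combination ((-1/4) + (1/2)*Real.sqrt 5 + (-1/4)*Real.sqrt 5*Real.sqrt 5)*hh3 + ((-3/4))*hh5]
  exact Real.sqrt_sq (by nlinarith [s5lb, s5ub, Real.sqrt_nonneg 3, Real.sqrt_nonneg 2, mul_nonneg (show (0:ℝ) ≤ Real.sqrt 5 - 1 by nlinarith [s5lb]) (Real.sqrt_nonneg 3)])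
private lemma sB : Real.sqrt (287 - 380*Real.sqrt 5/3) = (10*Real.sqrt 5 - 19)*Real.sqrt 3/3 := by
  rw [show (287 - 380*Real.sqrt 5/3 : ℝ) = ((10*Real.sqrt 5 - 19)*Real.sqrt 3/3)^2 from by linear_combination ((-361/9) + (380/9)*Real.sqrt 5 + (-100/9)*Real.sqrt 5*Real.sqrt 5)*hh3 + ((-100/3))*hh5]
  exact Real.sqrt_sq (by nlinarith [s5lb, s5ub, Real.sqrt_nonneg 3, Real.sqrt_nonneg 2, mul_nonneg (show (0:ℝ) ≤ 10*Real.sqrt 5 - 19 by nlinarith [s5lb]) (Real.sqrt_nonneg 3)])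
private lemma sC : Real.sqrt (83 - 104*Real.sqrt 5/3) = (13 - 4*Real.sqrt 5)*Real.sqrt 3/3 := by
  rw [show (83 - 104*Real.sqrt 5/3 : ℝ) = ((13 - 4*Real.sqrt 5)*Real.sqrt 3/3)^2 from by linear_combination ((-169/9) + (104/9)*Real.sqrt 5 + (-16/9)*Real.sqrt 5*Real.sqrt 5)*hh3 + ((-16/3))*hh5]
  exact Real.sqrt_sq (by nlinarith [s5lb, s5ub, Real.sqrt_nonneg 3, Real.sqrt_nonneg 2, mul_nonneg (show (0:ℝ) ≤ 13 - 4*Real.sqrt 5 by nlinarith [s5ub]) (Real.sqrt_nonneg 3)])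
private lemma sD : Real.sqrt (14 - 16*Real.sqrt 5/3) = (4 - Real.sqrt 5)*(Real.sqrt 2*Real.sqrt 3)/3 := by
  rw [show (14 - 16*Real.sqrt 5/3 : ℝ) = ((4 - Real.sqrt 5)*(Real.sqrt 2*Real.sqrt 3)/3)^2 from by linear_combination ((-16/9)*Real.sqrt 3*Real.sqrt 3 + (8/9)*Real.sqrt 3*Real.sqrt 3*Real.sqrt 5 + (-1/9)*Real.sqrt 3*Real.sqrt 3*Real.sqrt 5*Real.sqrt 5)*hh2 + ((-32/9) + (16/9)*Real.sqrt 5 + (-2/9)*Real.sqrt 5*Real.sqrt 5)*hh3 + ((-2/3))*hh5]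
  exact Real.sqrt_sq (by nlinarith [s5lb, s5ub, Real.sqrt_nonneg 3, Real.sqrt_nonneg 2, mul_nonneg (show (0:ℝ) ≤ 4 - Real.sqrt 5 by nlinarith [s5ub]) (mul_nonneg (Real.sqrt_nonneg 2) (Real.sqrt_nonneg 3))])
private lemma sE : Real.sqrt (369 + 165*Real.sqrt 5) = (11 + 5*Real.sqrt 5)*(Real.sqrt 2*Real.sqrt 3)/2 := by
  rw [show (369 + 165*Real.sqrt 5 : ℝ) = ((11 + 5*Real.sqrt 5)*(Real.sqrt 2*Real.sqrt 3)/2)^2 from by linear_combination ((-121/4)*Real.sqrt 3*Real.sqrt 3 + (-55/2)*Real.sqrt 3*Real.sqrt 3*Real.sqrt 5 + (-25/4)*Real.sqrt 3*Real.sqrt 3*Real.sqrt 5*Real.sqrt 5)*hh2 + ((-121/2) + -55*Real.sqrt 5 + (-25/2)*Real.sqrt 5*Real.sqrt 5)*hh3 + ((-75/2))*hh5]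
  exact Real.sqrt_sq (by nlinarith [s5lb, s5ub, Real.sqrt_nonneg 3, Real.sqrt_nonneg 2, mul_nonneg (show (0:ℝ) ≤ 11 + 5*Real.sqrt 5 by nlinarith [s5lb]) (mul_nonneg (Real.sqrt_nonneg 2) (Real.sqrt_nonneg 3))])
private lemma sF : Real.sqrt (83 - 33*Real.sqrt 5) = (11 - 3*Real.sqrt 5)*Real.sqrt 2/2 := by
  rw [show (83 - 33*Real.sqrt 5 : ℝ) = ((11 - 3*Real.sqrt 5)*Real.sqrt 2/2)^2 from by linear_combination ((-121/4) + (33/2)*Real.sqrt 5 + (-9/4)*Real.sqrt 5*Real.sqrt 5)*hh2 + ((-9/2))*hh5]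
  exact Real.sqrt_sq (by nlinarith [s5lb, s5ub, Real.sqrt_nonneg 3, Real.sqrt_nonneg 2, mul_nonneg (show (0:ℝ) ≤ 11 - 3*Real.sqrt 5 by nlinarith [s5ub]) (Real.sqrt_nonneg 2)])

private lemma eA : Real.sqrt ((3/2)*(3 - Real.sqrt 5))/4 = (Real.sqrt 5 - 1)*Real.sqrt 3/8 := by rw [sA]; ring
private lemma e101 : Real.sqrt (287 - 380*Real.sqrt 5/3)/24 = (10*Real.sqrt 5 - 19)*Real.sqrt 3/72 := by rw [sB]; ring
private lemma e110 : Real.sqrt (83 - 104*Real.sqrt 5/3)/24 = (13 - 4*Real.sqrt 5)*Real.sqrt 3/72 := by rw [sC]; ring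
private lemma e112 : Real.sqrt (14 - 16*Real.sqrt 5/3)/6 = (4 - Real.sqrt 5)*(Real.sqrt 2*Real.sqrt 3)/18 := by rw [sD]; ring
private lemma e320 : Real.sqrt (83 - 33*Real.sqrt 5)/36 = (11 - 3*Real.sqrt 5)*Real.sqrt 2/72 := by rw [sF]; ring
private lemma e102 : 1/(9*Real.sqrt 2) = Real.sqrt 2/18 := by
  rw [div_eq_div_iff (by positivity) (by norm_num)]; linear_combination (-9)*hh2
private lemma e120 : (-23 + 9*Real.sqrt 5)/(36*Real.sqrt 2) = (-23 + 9*Real.sqrt 5)*Real.sqrt 2/72 := by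
  rw [div_eq_div_iff (by positivity) (by norm_num)]; linear_combination (828 + -324*Real.sqrt 5)*hh2
private lemma e121 : (5 + Real.sqrt 5)/(12*Real.sqrt 6) = (5 + Real.sqrt 5)*(Real.sqrt 2*Real.sqrt 3)/72 := by
  rw [s6e]; rw [div_eq_div_iff (by positivity) (by norm_num)]; linear_combination (-60*Real.sqrt 3*Real.sqrt 3 + -12*Real.sqrt 3*Real.sqrt 3*Real.sqrt 5)*hh2 + (-120 + -24*Real.sqrt 5)*hh3
private lemma e201 : (-19 + Real.sqrt 5)/(48*Real.sqrt 3) = (-19 + Real.sqrt 5)*Real.sqrt 3/144 := by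
  rw [div_eq_div_iff (by positivity) (by norm_num)]; linear_combination (912 + -48*Real.sqrt 5)*hh3
private lemma e202 : (29 - 9*Real.sqrt 5)/(36*Real.sqrt 2) = (29 - 9*Real.sqrt 5)*Real.sqrt 2/72 := by
  rw [div_eq_div_iff (by positivity) (by norm_num)]; linear_combination (-1044 + 324*Real.sqrt 5)*hh2
private lemma e210 : (-41 + 11*Real.sqrt 5)/(48*Real.sqrt 3) = (-41 + 11*Real.sqrt 5)*Real.sqrt 3/144 := by
  rw [div_eq_div_iff (by positivity) (by norm_num)]; linear_combination (1968 + -528*Real.sqrt 5)*hh3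
private lemma e212 : (-1 + Real.sqrt 5)/(12*Real.sqrt 6) = (-1 + Real.sqrt 5)*(Real.sqrt 2*Real.sqrt 3)/72 := by
  rw [s6e]; rw [div_eq_div_iff (by positivity) (by norm_num)]; linear_combination (12*Real.sqrt 3*Real.sqrt 3 + -12*Real.sqrt 3*Real.sqrt 3*Real.sqrt 5)*hh2 + (24 + -24*Real.sqrt 5)*hh3
private lemma e220 : (11 - 9*Real.sqrt 5)/(36*Real.sqrt 2) = (11 - 9*Real.sqrt 5)*Real.sqrt 2/72 := by
  rw [div_eq_div_iff (by positivity) (by norm_num)]; linear_combination (-396 + 324*Real.sqrt 5)*hh2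
private lemma e221 : 1/(6*Real.sqrt (369 + 165*Real.sqrt 5)) = (5*Real.sqrt 5 - 11)*(Real.sqrt 2*Real.sqrt 3)/72 := by
  rw [sE]; rw [div_eq_div_iff (by positivity) (by norm_num)]; linear_combination (363*Real.sqrt 3*Real.sqrt 3 + -75*Real.sqrt 3*Real.sqrt 3*Real.sqrt 5*Real.sqrt 5)*hh2 + (726 + -150*Real.sqrt 5*Real.sqrt 5)*hh3 + (-450)*hh5
private lemma e301 : (13 - 2*Real.sqrt 5)/(24*Real.sqrt 3) = (13 - 2*Real.sqrt 5)*Real.sqrt 3/72 := by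
  rw [div_eq_div_iff (by positivity) (by norm_num)]; linear_combination (-312 + 48*Real.sqrt 5)*hh3
private lemma e302 : (-8 + 3*Real.sqrt 5)/(18*Real.sqrt 2) = (-8 + 3*Real.sqrt 5)*Real.sqrt 2/36 := by
  rw [div_eq_div_iff (by positivity) (by norm_num)]; linear_combination (144 + -54*Real.sqrt 5)*hh2
private lemma e310 : (-17 + 4*Real.sqrt 5)/(24*Real.sqrt 3) = (-17 + 4*Real.sqrt 5)*Real.sqrt 3/72 := by
  rw [div_eq_div_iff (by positivity) (by norm_num)]; linear_combination (408 + -96*Real.sqrt 5)*hh3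
private lemma e312 : (7 - 2*Real.sqrt 5)/(6*Real.sqrt 6) = (7 - 2*Real.sqrt 5)*(Real.sqrt 2*Real.sqrt 3)/36 := by
  rw [s6e]; rw [div_eq_div_iff (by positivity) (by norm_num)]; linear_combination (-42*Real.sqrt 3*Real.sqrt 3 + 12*Real.sqrt 3*Real.sqrt 3*Real.sqrt 5)*hh2 + (-84 + 24*Real.sqrt 5)*hh3
private lemma e321 : (11 - 7*Real.sqrt 5)/(12*Real.sqrt 6) = (11 - 7*Real.sqrt 5)*(Real.sqrt 2*Real.sqrt 3)/72 := by
  rw [s6e]; rw [div_eq_div_iff (by positivity) (by norm_num)]; linear_combination (-132*Real.sqrt 3*Real.sqrt 3 + 84*Real.sqrt 3*Real.sqrt 3*Real.sqrt 5)*hh2 + (-264 + 168*Real.sqrt 5)*hh3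

private lemma case0 : (R5 0)ᵀ * R5 0 = 1 ∧ (R5 0).det = 1 ∧
    (R5 0).trace = (5 + 3*Real.sqrt 5)/4 ∧
    (5 + 3*Real.sqrt 5)/4 =
      1 + 2 * Real.cos (Real.arccos ((3*((1 + Real.sqrt 5)/2) - 1)/4)) := by
  have hR : R5 0 = !![(1 + 3*Real.sqrt 5)/8, Real.sqrt ((3/2)*(3 - Real.sqrt 5))/4, 0;
      -(Real.sqrt ((3/2)*(3 - Real.sqrt 5))/4), (1 + 3*Real.sqrt 5)/8, 0;
      0, 0, 1] := rfl
  rw [eA] at hR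
  refine ⟨?_, ?_, ?_, ?_⟩
  · rw [hR, trans3, Matrix.mul_fin_three, Matrix.one_fin_three]
    refine congrArg Matrix.of (Matrix.vec3_eq (Matrix.vec3_eq ?_ ?_ ?_)
      (Matrix.vec3_eq ?_ ?_ ?_) (Matrix.vec3_eq ?_ ?_ ?_))
    · linear_combination ((1/64) + (-1/32)*Real.sqrt 5 + (1/64)*Real.sqrt 5*Real.sqrt 5)*hh3 + ((3/16))*hh5
    · ring
    · ring
    · ring
    · linear_combination ((1/64) + (-1/32)*Real.sqrt 5 + (1/64)*Real.sqrt 5*Real.sqrt 5)*hh3 + ((3/16))*hh5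
    · ring
    · ring
    · ring
    · ring
  · rw [hR]
    simp [Matrix.det_fin_three]
    linear_combination ((1/64) + (-1/32)*Real.sqrt 5 + (1/64)*Real.sqrt 5*Real.sqrt 5)*hh3 + ((3/16))*hh5
  · rw [hR]
    simp [Matrix.trace_fin_three]
    ring
  · rw [Real.cos_arccos (by nlinarith [Real.sqrt_nonneg 5]) (by nlinarith [s5ub])]
    ring

private lemma case1 : (R5 1)ᵀ * R5 1 = 1 ∧ (R5 1).det = 1 ∧
    (R5 1).trace = (5 + 3*Real.sqrt 5)/4 ∧
    (5 + 3*Real.sqrt 5)/4 =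
      1 + 2 * Real.cos (Real.arccos ((3*((1 + Real.sqrt 5)/2) - 1)/4)) := by
  have hR : R5 1 = !![(38 + 15*Real.sqrt 5)/72, Real.sqrt (287 - 380*Real.sqrt 5/3)/24, 1/(9*Real.sqrt 2);
      -(Real.sqrt (83 - 104*Real.sqrt 5/3)/24), 1/2 + 5*Real.sqrt 5/24, Real.sqrt (14 - 16*Real.sqrt 5/3)/6;
      (-23 + 9*Real.sqrt 5)/(36*Real.sqrt 2), -((5 + Real.sqrt 5)/(12*Real.sqrt 6)), (2 + 3*Real.sqrt 5)/9] := rfl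
  rw [e101, e110, e112, e102, e120, e121] at hR
  refine ⟨?_, ?_, ?_, ?_⟩
  · rw [hR, trans3, Matrix.mul_fin_three, Matrix.one_fin_three]
    refine congrArg Matrix.of (Matrix.vec3_eq (Matrix.vec3_eq ?_ ?_ ?_)
      (Matrix.vec3_eq ?_ ?_ ?_) (Matrix.vec3_eq ?_ ?_ ?_))
    · linear_combination ((529/5184) + (-23/288)*Real.sqrt 5 + (1/64)*Real.sqrt 5*Real.sqrt 5)*hh2 + ((169/5184) + (-13/648)*Real.sqrt 5 + (1/324)*Real.sqrt 5*Real.sqrt 5)*hh3 + ((145/1728))*hh5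
    · linear_combination ((115/5184)*Real.sqrt 3 + (-11/2592)*Real.sqrt 3*Real.sqrt 5 + (-1/576)*Real.sqrt 3*Real.sqrt 5*Real.sqrt 5)*hh2 + ((1/27)*Real.sqrt 3)*hh5
    · linear_combination ((-13/324)*Real.sqrt 2 + (29/1296)*Real.sqrt 2*Real.sqrt 5 + (-1/324)*Real.sqrt 2*Real.sqrt 5*Real.sqrt 5)*hh3 + ((7/216)*Real.sqrt 2)*hh5
    · linear_combination ((115/5184)*Real.sqrt 3 + (-11/2592)*Real.sqrt 3*Real.sqrt 5 + (-1/576)*Real.sqrt 3*Real.sqrt 5*Real.sqrt 5)*hh2 + ((1/27)*Real.sqrt 3)*hh5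
    · linear_combination ((25/5184)*Real.sqrt 3*Real.sqrt 3 + (5/2592)*Real.sqrt 3*Real.sqrt 3*Real.sqrt 5 + (1/5184)*Real.sqrt 3*Real.sqrt 3*Real.sqrt 5*Real.sqrt 5)*hh2 + ((137/1728) + (-5/72)*Real.sqrt 5 + (17/864)*Real.sqrt 5*Real.sqrt 5)*hh3 + ((59/576))*hh5
    · linear_combination ((-7/432)*Real.sqrt 2*Real.sqrt 3)*hh5
    · linear_combination ((-13/324)*Real.sqrt 2 + (29/1296)*Real.sqrt 2*Real.sqrt 5 + (-1/324)*Real.sqrt 2*Real.sqrt 5*Real.sqrt 5)*hh3 + ((7/216)*Real.sqrt 2)*hh5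
    · linear_combination ((-7/432)*Real.sqrt 2*Real.sqrt 3)*hh5
    · linear_combination ((1/324) + (4/81)*Real.sqrt 3*Real.sqrt 3 + (-2/81)*Real.sqrt 3*Real.sqrt 3*Real.sqrt 5 + (1/324)*Real.sqrt 3*Real.sqrt 3*Real.sqrt 5*Real.sqrt 5)*hh2 + ((8/81) + (-4/81)*Real.sqrt 5 + (1/162)*Real.sqrt 5*Real.sqrt 5)*hh3 + ((7/54))*hh5
  · rw [hR]
    simp [Matrix.det_fin_three]
    linear_combination ((23/2592) + (7/31104)*Real.sqrt 5 + (-5/3456)*Real.sqrt 5*Real.sqrt 5 + (2573/93312)*Real.sqrt 3*Real.sqrt 3 + (-893/46656)*Real.sqrt 3*Real.sqrt 3*Real.sqrt 5 + (11/1458)*Real.sqrt 3*Real.sqrt 3*Real.sqrt 5*Real.sqrt 5 + (-35/31104)*Real.sqrt 3*Real.sqrt 3*Real.sqrt 5*Real.sqrt 5*Real.sqrt 5)*hh2 + ((77/1728) + (-235/5184)*Real.sqrt 5 + (23/864)*Real.sqrt 5*Real.sqrt 5 + (-25/5184)*Real.sqrt 5*Real.sqrt 5*Real.sqrt 5)*hh3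 + ((91/576))*hh5
  · rw [hR]
    simp [Matrix.trace_fin_three]
    ring
  · rw [Real.cos_arccos (by nlinarith [Real.sqrt_nonneg 5]) (by nlinarith [s5ub])]
    ring

private lemma case2 : (R5 2)ᵀ * R5 2 = 1 ∧ (R5 2).det = 1 ∧
    (R5 2).trace = (5 + 3*Real.sqrt 5)/4 ∧
    (5 + 3*Real.sqrt 5)/4 =
      1 + 2 * Real.cos (Real.arccos ((3*((1 + Real.sqrt 5)/2) - 1)/4)) := by
  have hR : R5 2 = !![(65 + 33*Real.sqrt 5)/144, -((-19 + Real.sqrt 5)/(48*Real.sqrt 3)), (29 - 9*Real.sqrt 5)/(36*Real.sqrt 2);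
      (-41 + 11*Real.sqrt 5)/(48*Real.sqrt 3), (9 + 17*Real.sqrt 5)/48, -((-1 + Real.sqrt 5)/(12*Real.sqrt 6));
      (11 - 9*Real.sqrt 5)/(36*Real.sqrt 2), 1/(6*Real.sqrt (369 + 165*Real.sqrt 5)), (11 + 3*Real.sqrt 5)/18] := rfl
  rw [e201, e202, e210, e212, e220, e221] at hR
  refine ⟨?_, ?_, ?_, ?_⟩
  · rw [hR, trans3, Matrix.mul_fin_three, Matrix.one_fin_three]
    refine congrArg Matrix.of (Matrix.vec3_eq (Matrix.vec3_eq ?_ ?_ ?_)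
      (Matrix.vec3_eq ?_ ?_ ?_) (Matrix.vec3_eq ?_ ?_ ?_))
    · linear_combination ((121/5184) + (-11/288)*Real.sqrt 5 + (1/64)*Real.sqrt 5*Real.sqrt 5)*hh2 + ((1681/20736) + (-451/10368)*Real.sqrt 5 + (121/20736)*Real.sqrt 5*Real.sqrt 5)*hh3 + ((175/1728))*hh5
    · linear_combination ((-121/5184)*Real.sqrt 3 + (77/2592)*Real.sqrt 3*Real.sqrt 5 + (-5/576)*Real.sqrt 3*Real.sqrt 5*Real.sqrt 5)*hh2 + ((7/864)*Real.sqrt 3)*hh5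
    · linear_combination ((-41/10368)*Real.sqrt 2 + (13/2592)*Real.sqrt 2*Real.sqrt 5 + (-11/10368)*Real.sqrt 2*Real.sqrt 5*Real.sqrt 5)*hh3 + ((-91/1728)*Real.sqrt 2)*hh5
    · linear_combination ((-121/5184)*Real.sqrt 3 + (77/2592)*Real.sqrt 3*Real.sqrt 5 + (-5/576)*Real.sqrt 3*Real.sqrt 5*Real.sqrt 5)*hh2 + ((7/864)*Real.sqrt 3)*hh5
    · linear_combination ((121/5184)*Real.sqrt 3*Real.sqrt 3 + (-55/2592)*Real.sqrt 3*Real.sqrt 3*Real.sqrt 5 + (25/5184)*Real.sqrt 3*Real.sqrt 3*Real.sqrt 5*Real.sqrt 5)*hh2 + ((443/6912) + (-17/384)*Real.sqrt 5 + (67/6912)*Real.sqrt 5*Real.sqrt 5)*hh3 + ((89/576))*hh5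
    · linear_combination ((13/1728)*Real.sqrt 2*Real.sqrt 3)*hh5
    · linear_combination ((-41/10368)*Real.sqrt 2 + (13/2592)*Real.sqrt 2*Real.sqrt 5 + (-11/10368)*Real.sqrt 2*Real.sqrt 5*Real.sqrt 5)*hh3 + ((-91/1728)*Real.sqrt 2)*hh5
    · linear_combination ((13/1728)*Real.sqrt 2*Real.sqrt 3)*hh5
    · linear_combination ((841/5184) + (-29/288)*Real.sqrt 5 + (1/64)*Real.sqrt 5*Real.sqrt 5 + (1/5184)*Real.sqrt 3*Real.sqrt 3 + (-1/2592)*Real.sqrt 3*Real.sqrt 3*Real.sqrt 5 + (1/5184)*Real.sqrt 3*Real.sqrt 3*Real.sqrt 5*Real.sqrt 5)*hh2 + ((1/2592) + (-1/1296)*Real.sqrt 5 + (1/2592)*Real.sqrt 5*Real.sqrt 5)*hh3 + ((13/216))*hh5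
  · rw [hR]
    simp [Matrix.det_fin_three]
    linear_combination ((-319/27648) + (-2183/248832)*Real.sqrt 5 + (599/27648)*Real.sqrt 5*Real.sqrt 5 + (-17/3072)*Real.sqrt 5*Real.sqrt 5*Real.sqrt 5 + (14003/746496)*Real.sqrt 3*Real.sqrt 3 + (-14581/746496)*Real.sqrt 3*Real.sqrt 3*Real.sqrt 5 + (4517/746496)*Real.sqrt 3*Real.sqrt 3*Real.sqrt 5*Real.sqrt 5 + (-113/248832)*Real.sqrt 3*Real.sqrt 3*Real.sqrt 5*Real.sqrt 5*Real.sqrt 5)*hh2 + ((209/3456) + (-833/20736)*Real.sqrt 5 + (1/96)*Real.sqrt 5*Real.sqrt 5 + (-17/20736)*Real.sqrt 5*Real.sqrt 5*Real.sqrt 5)*hh3 + ((91/576))*hh5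
  · rw [hR]
    simp [Matrix.trace_fin_three]
    ring
  · rw [Real.cos_arccos (by nlinarith [Real.sqrt_nonneg 5]) (by nlinarith [s5ub])]
    ring

private lemma case3 : (R5 3)ᵀ * R5 3 = 1 ∧ (R5 3).det = 1 ∧
    (R5 3).trace = (5 + 3*Real.sqrt 5)/4 ∧
    (5 + 3*Real.sqrt 5)/4 =
      1 + 2 * Real.cos (Real.arccos ((3*((1 + Real.sqrt 5)/2) - 1)/4)) := by
  have hR : R5 3 = !![5/36 + 3*Real.sqrt 5/8, (13 - 2*Real.sqrt 5)/(24*Real.sqrt 3), (-8 + 3*Real.sqrt 5)/(18*Real.sqrt 2);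
      (-17 + 4*Real.sqrt 5)/(24*Real.sqrt 3), 1/2 + 5*Real.sqrt 5/24, (7 - 2*Real.sqrt 5)/(6*Real.sqrt 6);
      Real.sqrt (83 - 33*Real.sqrt 5)/36, (11 - 7*Real.sqrt 5)/(12*Real.sqrt 6), (11 + 3*Real.sqrt 5)/18] := rfl
  rw [e301, e302, e310, e312, e320, e321] at hR
  refine ⟨?_, ?_, ?_, ?_⟩
  · rw [hR, trans3, Matrix.mul_fin_three, Matrix.one_fin_three]
    refine congrArg Matrix.of (Matrix.vec3_eq (Matrix.vec3_eq ?_ ?_ ?_)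
      (Matrix.vec3_eq ?_ ?_ ?_) (Matrix.vec3_eq ?_ ?_ ?_))
    · linear_combination ((121/5184) + (-11/864)*Real.sqrt 5 + (1/576)*Real.sqrt 5*Real.sqrt 5)*hh2 + ((289/5184) + (-17/648)*Real.sqrt 5 + (1/324)*Real.sqrt 5*Real.sqrt 5)*hh3 + ((265/1728))*hh5
    · linear_combination ((121/5184)*Real.sqrt 3 + (-55/2592)*Real.sqrt 3*Real.sqrt 5 + (7/1728)*Real.sqrt 3*Real.sqrt 5*Real.sqrt 5)*hh2 + ((1/108)*Real.sqrt 3)*hh5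
    · linear_combination ((-119/2592)*Real.sqrt 2 + (31/1296)*Real.sqrt 2*Real.sqrt 5 + (-1/324)*Real.sqrt 2*Real.sqrt 5*Real.sqrt 5)*hh3 + ((13/864)*Real.sqrt 2)*hh5
    · linear_combination ((121/5184)*Real.sqrt 3 + (-55/2592)*Real.sqrt 3*Real.sqrt 5 + (7/1728)*Real.sqrt 3*Real.sqrt 5*Real.sqrt 5)*hh2 + ((1/108)*Real.sqrt 3)*hh5
    · linear_combination ((121/5184)*Real.sqrt 3*Real.sqrt 3 + (-77/2592)*Real.sqrt 3*Real.sqrt 3*Real.sqrt 5 + (49/5184)*Real.sqrt 3*Real.sqrt 3*Real.sqrt 5*Real.sqrt 5)*hh2 + ((137/1728) + (-5/72)*Real.sqrt 5 + (17/864)*Real.sqrt 5*Real.sqrt 5)*hh3 + ((59/576))*hh5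
    · linear_combination ((-13/432)*Real.sqrt 2*Real.sqrt 3)*hh5
    · linear_combination ((-119/2592)*Real.sqrt 2 + (31/1296)*Real.sqrt 2*Real.sqrt 5 + (-1/324)*Real.sqrt 2*Real.sqrt 5*Real.sqrt 5)*hh3 + ((13/864)*Real.sqrt 2)*hh5
    · linear_combination ((-13/432)*Real.sqrt 2*Real.sqrt 3)*hh5
    · linear_combination ((4/81) + (-1/27)*Real.sqrt 5 + (1/144)*Real.sqrt 5*Real.sqrt 5 + (49/1296)*Real.sqrt 3*Real.sqrt 3 + (-7/324)*Real.sqrt 3*Real.sqrt 3*Real.sqrt 5 + (1/324)*Real.sqrt 3*Real.sqrt 3*Real.sqrt 5*Real.sqrt 5)*hh2 + ((49/648) + (-7/162)*Real.sqrt 5 + (1/162)*Real.sqrt 5*Real.sqrt 5)*hh3 + ((13/216))*hh5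
  · rw [hR]
    simp [Matrix.det_fin_three]
    linear_combination ((11/648) + (-61/15552)*Real.sqrt 5 + (-59/20736)*Real.sqrt 5*Real.sqrt 5 + (5/6912)*Real.sqrt 5*Real.sqrt 5*Real.sqrt 5 + (1727/186624)*Real.sqrt 3*Real.sqrt 3 + (-3947/186624)*Real.sqrt 3*Real.sqrt 3*Real.sqrt 5 + (1327/93312)*Real.sqrt 3*Real.sqrt 3*Real.sqrt 5*Real.sqrt 5 + (-79/31104)*Real.sqrt 3*Real.sqrt 3*Real.sqrt 5*Real.sqrt 5*Real.sqrt 5)*hh2 + ((77/1728) + (-235/5184)*Real.sqrt 5 + (23/864)*Real.sqrt 5*Real.sqrt 5 + (-25/5184)*Real.sqrt 5*Real.sqrt 5*Real.sqrt 5)*hh3 + ((91/576))*hh5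
  · rw [hR]
    simp [Matrix.trace_fin_three]
    ring
  · rw [Real.cos_arccos (by nlinarith [Real.sqrt_nonneg 5]) (by nlinarith [s5ub])]
    ring

theorem fiveBC_rotations_SO3_trace :
    ∀ k : Fin 4,
      (R5 k)ᵀ * R5 k = 1 ∧ (R5 k).det = 1 ∧
      (R5 k).trace = (5 + 3*Real.sqrt 5)/4 ∧
      (5 + 3*Real.sqrt 5)/4 =
        1 + 2 * Real.cos (Real.arccos ((3*((1 + Real.sqrt 5)/2) - 1)/4)) := by
  intro k
  fin_cases k
  exacts [case0, case1, case2, case3]
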